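/- Let E be a complete real inner product space, f : E → ℝ a differentiable function with gradient ∇f, and L > 0. Let t' < t be real numbers and c : ℝ → E a curve differentiable on [t', t] satisfying the negative gradient equation c'(s) = −∇f(c(s)) for all s ∈ [t', t]. Suppose that 1/L ≤ ‖∇f(c(s))‖ ≤ L for all s ∈ [t', t], and that ‖c(t) − c(t')‖ > 1/L. Then f(c(t')) − f(c(t)) > 1/L⁴. -/

import Mathlib

/-- Crossing-energy estimate.  Let `f` be a differentiable function on a real Hilbert
space and `c` a negative gradient trajectory on `[t', t]`.  If `1/L ≤ ‖∇f (c s)‖ ≤ L`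
on `[t', t]` and `‖c t - c t'‖ > 1/L`, then `f (c t') - f (c t) > 1/L⁴`. -/
theorem stmt15 {E : Type*} [NormedAddCommGroup E] [InnerProductSpace ℝ E]
    [CompleteSpace E]
    (f : E → ℝ) (hf : Differentiable ℝ f)
    (L : ℝ) (hL : 0 < L)
    (t' t : ℝ) (htt : t' < t)
    (c : ℝ → E)
    (hode : ∀ s ∈ Set.Icc t' t, HasDerivAt c (-(gradient f (c s))) s)
    (hlow : ∀ s ∈ Set.Icc t' t, 1 / L ≤ ‖gradient f (c s)‖)
    (hup : ∀ s ∈ Set.Icc t' t, ‖gradient f (c s)‖ ≤ L)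
    (hdist : 1 / L < ‖c t - c t'‖) :
    1 / L ^ 4 < f (c t') - f (c t) := by
  -- derivative of f ∘ c
  have hderiv : ∀ s ∈ Set.Icc t' t,
      HasDerivAt (fun u => f (c u)) (-‖gradient f (c s)‖ ^ 2) s := by
    intro s hs
    have hg := (hf (c s)).hasGradientAt
    have h := hg.hasFDerivAt.comp_hasDerivAt s (hode s hs)
    refine h.congr_deriv ?_
    rw [map_neg, InnerProductSpace.toDual_apply_apply, real_inner_self_eq_norm_sq]
  -- speed bound: ‖c t - c t'‖ ≤ L * (t - t')
  have hspeed : ‖c t - c t'‖ ≤ L * (t - t') := by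
    have := (convex_Icc t' t).norm_image_sub_le_of_norm_hasDerivWithin_le
      (f := c) (f' := fun s => -(gradient f (c s))) (C := L)
      (fun s hs => (hode s hs).hasDerivWithinAt)
      (fun s hs => by simpa using hup s hs)
      (Set.left_mem_Icc.2 htt.le) (Set.right_mem_Icc.2 htt.le)
    simpa [abs_of_nonneg (sub_nonneg.2 htt.le)] using this
  -- energy decrease: f(c t') - f(c t) ≥ (t - t')/L²
  have hanti : AntitoneOn (fun s => f (c s) + s / L ^ 2) (Set.Icc t' t) := by
    apply antitoneOn_of_deriv_nonpos (convex_Icc t' t)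
    · intro s hs
      exact ((hderiv s hs).add ((hasDerivAt_id' (x := s)).div_const (L ^ 2))).continuousAt.continuousWithinAt
    · intro s hs
      rw [interior_Icc] at hs
      exact (((hderiv s (Set.Ioo_subset_Icc_self hs)).add
        ((hasDerivAt_id' (x := s)).div_const (L ^ 2))).differentiableAt).differentiableWithinAt
    · intro s hs
      rw [interior_Icc] at hs
      have hs' := Set.Ioo_subset_Icc_self hs
      rw [HasDerivAt.deriv (f := fun s => f (c s) + s / L ^ 2)
        ((hderiv s hs').add ((hasDerivAt_id' (x := s)).div_const (L ^ 2)))]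
      have h1 : 1 / L ≤ ‖gradient f (c s)‖ := hlow s hs'
      have h2 : (1 / L) ^ 2 ≤ ‖gradient f (c s)‖ ^ 2 :=
        pow_le_pow_left₀ (by positivity) h1 2
      have : 1 / L ^ 2 ≤ ‖gradient f (c s)‖ ^ 2 := by
        rwa [div_pow, one_pow] at h2
      nlinarith
  have hE := hanti (Set.left_mem_Icc.2 htt.le) (Set.right_mem_Icc.2 htt.le) htt.le
  simp only at hE
  -- t - t' > 1/L²
  have hgap : 1 / L ^ 2 < t - t' := by
    have h1 : 1 / L < L * (t - t') := lt_of_lt_of_le hdist hspeed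
    have h2 : 1 < L * (t - t') * L := (div_lt_iff₀ hL).mp h1
    rw [div_lt_iff₀ (by positivity)]
    nlinarith
  have hLL : (0 : ℝ) < L ^ 2 := by positivity
  have key : (t - t') / L ^ 2 ≤ f (c t') - f (c t) := by
    rw [sub_div]; linarith
  have : 1 / L ^ 4 < (t - t') / L ^ 2 := by
    have hgap' : 1 < (t - t') * L ^ 2 := (div_lt_iff₀ hLL).mp hgap
    rw [div_lt_div_iff₀ (by positivity) hLL]
    nlinarith [mul_lt_mul_of_pos_right hgap' hLL]
  linarith
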